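/- Let L be the Laplacian of a connected weighted graph on n nodes and let e = {i,j} be a pair of distinct indices. Then for every weight w > 0, the improvement of the squared spectral zeta function ζ₂²(L) = tr((L^†)²) obtained by adding the weighted edge w·L_e is bounded by a fundamental limit independent of w: ζ₂²(L) − ζ₂²(L + wL_e) ≤ 2 r_e(L³)/r_e(L) − [r_e(L²)/r_e(L)]². -/

import Mathlib

open Filter Finset Matrix

/-- `L` is the Laplacian matrix of a connected weighted graph: symmetric positive semidefinite,
`L 𝟙 = 0`, and the kernel of `L` is exactly the span of the all-ones vector. -/
def IsConnLaplacian {n : ℕ} (L : Matrix (Fin n) (Fin n) ℝ) : Prop :=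
  L.PosSemidef ∧ (L *ᵥ (fun _ => (1 : ℝ)) = 0) ∧
    ∀ v : Fin n → ℝ, L *ᵥ v = 0 → ∃ c : ℝ, v = fun _ => c

/-- The all-ones `n × n` matrix `J`. -/
def Jmat (n : ℕ) : Matrix (Fin n) (Fin n) ℝ := Matrix.of fun _ _ => (1 : ℝ)

/-- Moore–Penrose pseudoinverse of a connected-graph Laplacian:
`L^† = (L + (1/n) J)⁻¹ − (1/n) J`. -/
noncomputable def lapPinv {n : ℕ} (L : Matrix (Fin n) (Fin n) ℝ) : Matrix (Fin n) (Fin n) ℝ :=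
  (L + (1 / (n : ℝ)) • Jmat n)⁻¹ - (1 / (n : ℝ)) • Jmat n

/-- The single-edge Laplacian `L_e = (δ_i − δ_j)(δ_i − δ_j)ᵀ`. -/
def edgeLap {n : ℕ} (i j : Fin n) : Matrix (Fin n) (Fin n) ℝ :=
  Matrix.vecMulVec (Pi.single i 1 - Pi.single j 1) (Pi.single i 1 - Pi.single j 1)

/-- Effective resistance `r_e(L^m)` between nodes `i` and `j`, computed from `L^{†,m}`. -/
noncomputable def reff {n : ℕ} (L : Matrix (Fin n) (Fin n) ℝ) (m : ℕ) (i j : Fin n) : ℝ :=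
  (lapPinv L ^ m) i i + (lapPinv L ^ m) j j - 2 * (lapPinv L ^ m) i j

namespace ZetaAux

variable {n : ℕ}

lemma mul_vecMulVec' (A : Matrix (Fin n) (Fin n) ℝ) (x y : Fin n → ℝ) :
    A * vecMulVec x y = vecMulVec (A *ᵥ x) y := by
  ext a b
  simp [mul_apply, vecMulVec_apply, mulVec, dotProduct, Finset.sum_mul, mul_assoc]

lemma vecMulVec_mul' (A : Matrix (Fin n) (Fin n) ℝ) (x y : Fin n → ℝ) :
    vecMulVec x y * A = vecMulVec x (y ᵥ* A) := by
  ext a b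
  simp [mul_apply, vecMulVec_apply, vecMul, dotProduct, Finset.mul_sum, mul_assoc]

lemma vecMulVec_mul_vecMulVec' (x y z t : Fin n → ℝ) :
    vecMulVec x y * vecMulVec z t = (y ⬝ᵥ z) • vecMulVec x t := by
  ext a b
  simp [mul_apply, vecMulVec_apply, dotProduct, Finset.sum_mul, Finset.mul_sum]
  ring_nf
  congr 1; ext k; ring

lemma trace_vecMulVec' (x y : Fin n → ℝ) : (vecMulVec x y).trace = x ⬝ᵥ y := by
  simp [Matrix.trace, vecMulVec_apply, dotProduct, Matrix.diag]

lemma Jmat_mulVec (x : Fin n → ℝ) : Jmat n *ᵥ x = fun _ => ∑ k, x k := by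
  ext a; simp [Jmat, mulVec, dotProduct]

lemma dot_Jmat (x : Fin n → ℝ) : x ⬝ᵥ (Jmat n *ᵥ x) = (∑ k, x k) ^ 2 := by
  simp [Jmat_mulVec, dotProduct, ← Finset.sum_mul, sq]

lemma Jmat_mul_Jmat : Jmat n * Jmat n = (n : ℝ) • Jmat n := by
  ext a b; simp [Jmat, mul_apply]

lemma Jmat_transpose : (Jmat n)ᵀ = Jmat n := by ext a b; simp [Jmat]

lemma L_mul_Jmat {L : Matrix (Fin n) (Fin n) ℝ} (h : L *ᵥ (fun _ => (1:ℝ)) = 0) :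
    L * Jmat n = 0 := by
  ext a b
  have := congrFun h a
  simpa [Jmat, mul_apply, mulVec, dotProduct] using this

lemma Jmat_mul_L {L : Matrix (Fin n) (Fin n) ℝ} (hsym : Lᵀ = L)
    (h : L *ᵥ (fun _ => (1:ℝ)) = 0) : Jmat n * L = 0 := by
  have h1 : Lᵀ * Jmat n = 0 := L_mul_Jmat (by rw [hsym]; exact h)
  have h2 : Jmat n * L = (Lᵀ * Jmat n)ᵀ := by
    rw [Matrix.transpose_mul, Matrix.transpose_transpose, Jmat_transpose]
  rw [h2, h1, Matrix.transpose_zero]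

lemma A_posDef (hn : 0 < n) (L : Matrix (Fin n) (Fin n) ℝ) (hpsd : L.PosSemidef)
    (h1 : L *ᵥ (fun _ => (1:ℝ)) = 0)
    (hker : ∀ v : Fin n → ℝ, L *ᵥ v = 0 → ∃ c : ℝ, v = fun _ => c) :
    (L + (1 / (n : ℝ)) • Jmat n).PosDef := by
  have hnR : (0:ℝ) < (n:ℝ) := by exact_mod_cast hn
  rw [Matrix.posDef_iff_dotProduct_mulVec]
  constructor
  · have hLh := hpsd.1
    ext a b
    simp only [Matrix.conjTranspose_apply, Matrix.add_apply, Matrix.smul_apply, Jmat,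
      Matrix.of_apply, star_trivial, smul_eq_mul, mul_one]
    have := congrFun (congrFun hLh a) b
    simp only [Matrix.conjTranspose_apply, star_trivial] at this
    rw [this]
  · intro x hx
    have hLx0 : (0:ℝ) ≤ x ⬝ᵥ (L *ᵥ x) := by simpa using hpsd.dotProduct_mulVec_nonneg x
    have hJ : (0:ℝ) ≤ (1/(n:ℝ)) * (∑ k, x k)^2 := by positivity
    have hexp : x ⬝ᵥ ((L + (1 / (n : ℝ)) • Jmat n) *ᵥ x)
        = x ⬝ᵥ (L *ᵥ x) + (1/(n:ℝ)) * (∑ k, x k)^2 := by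
      rw [add_mulVec, dotProduct_add, smul_mulVec, dotProduct_smul, dot_Jmat]
      simp [smul_eq_mul]
    rw [show star x = x from star_trivial x, hexp]
    rcases lt_or_eq_of_le hLx0 with h | h
    · linarith
    rcases lt_or_eq_of_le hJ with h2 | h2
    · linarith
    exfalso
    have hLx : L *ᵥ x = 0 := by
      rw [← hpsd.dotProduct_mulVec_zero_iff x]
      rw [show star x = x from star_trivial x]; exact h.symm
    obtain ⟨c, rfl⟩ := hker x hLx
    have hsum : (∑ _k : Fin n, c) = (n:ℝ) * c := by simp [mul_comm]
    have : (n:ℝ) * c = 0 := by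
      by_contra hc
      have : (1/(n:ℝ)) * ((n:ℝ)*c)^2 > 0 := by positivity
      rw [← hsum] at this; linarith
    have hc0 : c = 0 := by
      rcases mul_eq_zero.mp this with h' | h'
      · exact absurd h' (ne_of_gt hnR)
      · exact h'
    exact hx (by ext a; simp [hc0])

lemma dot_u_eq (B : Matrix (Fin n) (Fin n) ℝ) (hB : Bᵀ = B) (i j : Fin n) :
    (Pi.single i 1 - Pi.single j 1) ⬝ᵥ (B *ᵥ (Pi.single i 1 - Pi.single j 1))
      = B i i + B j j - 2 * B i j := by
  have hsym : B j i = B i j := by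
    have := congrFun (congrFun hB i) j
    simpa [Matrix.transpose_apply] using this
  simp only [Matrix.mulVec_sub, Matrix.mulVec_single_one, Matrix.col_apply, sub_dotProduct, dotProduct_sub,
    single_dotProduct, mul_one, one_mul, Pi.sub_apply]
  rw [hsym]
  ring

lemma shermanMorrison (A : Matrix (Fin n) (Fin n) ℝ) (hA : IsUnit A.det)
    (hAisym : A⁻¹ᵀ = A⁻¹) (u : Fin n → ℝ) (w : ℝ)
    (hden : 1 + w * (u ⬝ᵥ (A⁻¹ *ᵥ u)) ≠ 0) :
    (A + w • vecMulVec u u)⁻¹ =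
      A⁻¹ - (w / (1 + w * (u ⬝ᵥ (A⁻¹ *ᵥ u)))) • vecMulVec (A⁻¹ *ᵥ u) (A⁻¹ *ᵥ u) := by
  set r : ℝ := u ⬝ᵥ (A⁻¹ *ᵥ u) with hr
  set c : ℝ := w / (1 + w * r) with hc
  set v : Fin n → ℝ := A⁻¹ *ᵥ u with hv
  apply inv_eq_right_inv
  have hAAi : A * A⁻¹ = 1 := Matrix.mul_nonsing_inv A hA
  have hAv : A *ᵥ v = u := by
    rw [hv, Matrix.mulVec_mulVec, hAAi, Matrix.one_mulVec]
  have huAi : u ᵥ* A⁻¹ = v := by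
    rw [← Matrix.mulVec_transpose, hAisym, hv]
  have key : w - (c + w * (c * r)) = 0 := by
    rw [hc]; field_simp; ring
  rw [Matrix.add_mul, Matrix.mul_sub, Matrix.mul_sub, Matrix.mul_smul, Matrix.smul_mul,
    Matrix.smul_mul, Matrix.mul_smul, hAAi, mul_vecMulVec', hAv,
    vecMulVec_mul' (A⁻¹) u u, huAi, vecMulVec_mul_vecMulVec' u u v v, ← hr]
  rw [smul_smul, smul_smul]
  ext a b
  simp only [Matrix.sub_apply, Matrix.add_apply, Matrix.smul_apply, smul_eq_mul]
  have := congrFun (congrFun (congrArg (fun (t:ℝ) => t • vecMulVec u v) key) a) b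
  simp only [Matrix.smul_apply, zero_smul, Matrix.zero_apply, smul_eq_mul] at this
  nlinarith [this]

end ZetaAux

open ZetaAux

set_option maxHeartbeats 1000000

/-- Fundamental limit on the improvement of ζ₂²(L) = tr((L^†)²) by adding one weighted
edge, independent of the edge weight. -/
theorem zeta_two_sq_improvement_fundamental_limit {n : ℕ}
    (L : Matrix (Fin n) (Fin n) ℝ) (hL : IsConnLaplacian L)
    (i j : Fin n) (hij : i ≠ j) (w : ℝ) (hw : 0 < w) :
    (lapPinv L ^ 2).trace - (lapPinv (L + w • edgeLap i j) ^ 2).trace ≤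
      2 * reff L 3 i j / reff L 1 i j - (reff L 2 i j / reff L 1 i j) ^ 2 := by
  obtain ⟨hpsd, h1, hker⟩ := hL
  have hn : 0 < n := i.pos
  have hnR : (0:ℝ) < (n:ℝ) := by exact_mod_cast hn
  set c₀ : ℝ := 1 / (n:ℝ) with hc₀
  set J : Matrix (Fin n) (Fin n) ℝ := Jmat n with hJdef
  set A : Matrix (Fin n) (Fin n) ℝ := L + c₀ • J with hAdef
  set u : Fin n → ℝ := Pi.single i 1 - Pi.single j 1 with hudef
  have hApd : A.PosDef := A_posDef hn L hpsd h1 hker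
  have hAdet : IsUnit A.det := isUnit_iff_ne_zero.mpr (ne_of_gt hApd.det_pos)
  have hLsymT : Lᵀ = L := by
    ext a b
    have := congrFun (congrFun hpsd.1 a) b
    simpa using this
  have hAsymT : Aᵀ = A := by
    rw [hAdef, Matrix.transpose_add, hLsymT, Matrix.transpose_smul, hJdef, Jmat_transpose]
  have hAisym : A⁻¹ᵀ = A⁻¹ := by rw [Matrix.transpose_nonsing_inv, hAsymT]
  set M : Matrix (Fin n) (Fin n) ℝ := lapPinv L with hMdef
  have hM : M = A⁻¹ - c₀ • J := rfl
  -- J kills u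
  have hsumu : ∑ k, u k = 0 := by
    simp [hudef, Finset.sum_sub_distrib, Pi.single_apply]
  have hJu : J *ᵥ u = 0 := by
    rw [hJdef, Jmat_mulVec]; ext a; simp [hsumu]
  have hMu : M *ᵥ u = A⁻¹ *ᵥ u := by
    rw [hM, Matrix.sub_mulVec, Matrix.smul_mulVec, hJu]
    simp
  -- A⁻¹ * J = J and J * A⁻¹ = J
  have hAJ : A * J = J := by
    rw [hAdef, Matrix.add_mul, hJdef, L_mul_Jmat h1, Matrix.smul_mul, Jmat_mul_Jmat,
      smul_smul, hc₀]
    rw [one_div_mul_cancel (ne_of_gt hnR)]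
    simp
  have hJA : J * A = J := by
    rw [hAdef, Matrix.mul_add, hJdef, Jmat_mul_L hLsymT h1, Matrix.mul_smul, Jmat_mul_Jmat,
      smul_smul, hc₀]
    rw [one_div_mul_cancel (ne_of_gt hnR)]
    simp
  have hAiA : A⁻¹ * A = 1 := Matrix.nonsing_inv_mul A hAdet
  have hAAi : A * A⁻¹ = 1 := Matrix.mul_nonsing_inv A hAdet
  have hAiJ : A⁻¹ * J = J := by
    calc A⁻¹ * J = A⁻¹ * (A * J) := by rw [hAJ]
    _ = (A⁻¹ * A) * J := by rw [Matrix.mul_assoc]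
    _ = J := by rw [hAiA, Matrix.one_mul]
  have hJAi : J * A⁻¹ = J := by
    calc J * A⁻¹ = (J * A) * A⁻¹ := by rw [hJA]
    _ = J * (A * A⁻¹) := by rw [Matrix.mul_assoc]
    _ = J := by rw [hAAi, Matrix.mul_one]
  -- M is PSD
  set P : Matrix (Fin n) (Fin n) ℝ := 1 - c₀ • J with hPdef
  have hPherm : Pᴴ = P := by
    rw [hPdef]
    ext a b
    simp [Matrix.conjTranspose_apply, Matrix.one_apply, hJdef, Jmat, eq_comm]
  have hJJ : J * J = (n:ℝ) • J := by rw [hJdef]; exact Jmat_mul_Jmat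
  have hMP : M = Pᴴ * A⁻¹ * P := by
    rw [hPherm, hPdef, hM]
    have e1 : (1 - c₀ • J) * A⁻¹ = A⁻¹ - c₀ • J := by
      rw [Matrix.sub_mul, Matrix.one_mul, Matrix.smul_mul, hJAi]
    have e0 : (A⁻¹ - c₀ • J) * (c₀ • J) = 0 := by
      rw [Matrix.mul_smul, Matrix.sub_mul, hAiJ, Matrix.smul_mul, hJJ, smul_smul, hc₀,
        one_div_mul_cancel (ne_of_gt hnR), one_smul, sub_self, smul_zero]
    rw [e1, Matrix.mul_sub, Matrix.mul_one, e0, sub_zero]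
  have hMpsd : M.PosSemidef := by
    rw [hMP]
    exact (hApd.inv.posSemidef).conjTranspose_mul_mul_same P
  have hMsymT : Mᵀ = M := by
    ext a b
    have := congrFun (congrFun hMpsd.1 a) b
    simpa using this
  -- resistances
  set v : Fin n → ℝ := M *ᵥ u with hvdef
  set r₁ : ℝ := u ⬝ᵥ v with hr₁
  set r₂ : ℝ := v ⬝ᵥ v with hr₂
  set r₃ : ℝ := v ⬝ᵥ (M *ᵥ v) with hr₃
  have hu0 : u ≠ 0 := by
    intro h
    have := congrFun h i
    simp [hudef, Pi.single_apply, hij.symm] at this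
  have hr1pos : 0 < r₁ := by
    have := hApd.inv.dotProduct_mulVec_pos (x := u) (by simpa using hu0)
    rw [show star u = u from star_trivial u] at this
    rw [hr₁, hMu]
    exact this
  have hr2nn : 0 ≤ r₂ := by
    rw [hr₂]
    simpa using dotProduct_self_star_nonneg v
  -- mixed products
  have hvM : v ᵥ* M = M *ᵥ v := by
    rw [← Matrix.mulVec_transpose, hMsymT]
  have huM : u ᵥ* M = v := by
    rw [← Matrix.mulVec_transpose, hMsymT]
  have hmixed : u ⬝ᵥ (M *ᵥ v) = r₂ := by
    rw [Matrix.dotProduct_mulVec, huM, hr₂]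
  have hvMu : v ⬝ᵥ (M *ᵥ u) = r₂ := by rw [← hvdef, hr₂]
  -- Cauchy-Schwarz : r₂^2 ≤ r₃ * r₁
  have hCS : r₂^2 ≤ r₃ * r₁ := by
    have hq : ∀ t : ℝ, 0 ≤ r₃ * (t*t) + (2*r₂) * t + r₁ := by
      intro t
      have h0 := hMpsd.dotProduct_mulVec_nonneg (u + t • v)
      rw [show star (u + t • v) = u + t • v from star_trivial _] at h0
      have hexp : (u + t • v) ⬝ᵥ (M *ᵥ (u + t • v))
          = r₃ * (t*t) + (2*r₂) * t + r₁ := by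
        rw [Matrix.mulVec_add, Matrix.mulVec_smul, dotProduct_add, add_dotProduct,
          add_dotProduct, dotProduct_smul, smul_dotProduct, smul_dotProduct,
          dotProduct_smul, hmixed, hvMu, ← hvdef, ← hr₁, ← hr₃]
        simp only [smul_eq_mul]
        ring
      rw [hexp] at h0
      simpa using h0
    have := discrim_le_zero hq
    rw [discrim] at this
    nlinarith [this]
  -- Sherman-Morrison
  have hdenpos : (0:ℝ) < 1 + w * r₁ := by nlinarith
  set c : ℝ := w / (1 + w * r₁) with hcdef
  have hc0 : 0 ≤ c := div_nonneg hw.le hdenpos.le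
  have hcr : c * r₁ ≤ 1 := by
    rw [hcdef, div_mul_eq_mul_div, div_le_one hdenpos]
    nlinarith
  have hden' : 1 + w * (u ⬝ᵥ (A⁻¹ *ᵥ u)) ≠ 0 := by
    rw [← hMu, ← hr₁]; exact ne_of_gt hdenpos
  have hSM := shermanMorrison A hAdet hAisym u w hden'
  rw [← hMu, ← hr₁] at hSM
  have hedge : edgeLap i j = vecMulVec u u := rfl
  have hM' : lapPinv (L + w • edgeLap i j) = M - c • vecMulVec v v := by
    show (L + w • edgeLap i j + c₀ • Jmat n)⁻¹ - c₀ • Jmat n = _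
    rw [hedge, show L + w • vecMulVec u u + c₀ • Jmat n = A + w • vecMulVec u u by
      rw [hAdef, hJdef]; abel]
    rw [hSM, hM, hcdef, hJdef]
    abel
  -- trace computation
  set N : Matrix (Fin n) (Fin n) ℝ := vecMulVec v v with hNdef
  have htrMN : (M * N).trace = r₃ := by
    rw [hNdef, mul_vecMulVec', trace_vecMulVec', dotProduct_comm, hr₃]
  have htrNM : (N * M).trace = r₃ := by
    rw [hNdef, vecMulVec_mul', trace_vecMulVec', hvM, hr₃]
  have htrNN : (N * N).trace = r₂ * r₂ := by
    rw [hNdef, vecMulVec_mul_vecMulVec', ← hr₂, Matrix.trace_smul, trace_vecMulVec', ← hr₂,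
      smul_eq_mul]
  have htr : (lapPinv (L + w • edgeLap i j) ^ 2).trace
      = (M ^ 2).trace - 2 * c * r₃ + c^2 * (r₂ * r₂) := by
    simp only [hM', pow_two, Matrix.sub_mul, Matrix.mul_sub, Matrix.smul_mul,
      Matrix.mul_smul, smul_smul, Matrix.trace_sub, Matrix.trace_smul, htrMN, htrNM, htrNN,
      smul_eq_mul]
    ring
  -- identify the reff values
  have hre1 : reff L 1 i j = r₁ := by
    have h := dot_u_eq M hMsymT i j
    rw [← hudef, ← hvdef, ← hr₁] at h
    rw [h]
    simp [reff, ← hMdef]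
  have hre2 : reff L 2 i j = r₂ := by
    have hsq : (M^2)ᵀ = M^2 := by rw [Matrix.transpose_pow, hMsymT]
    have h := dot_u_eq (M^2) hsq i j
    rw [← hudef] at h
    have h2 : u ⬝ᵥ ((M^2) *ᵥ u) = r₂ := by
      rw [pow_two, ← Matrix.mulVec_mulVec, ← hvdef, hmixed]
    rw [h2] at h
    rw [h]
    simp [reff, ← hMdef]
  have hre3 : reff L 3 i j = r₃ := by
    have hsq : (M^3)ᵀ = M^3 := by rw [Matrix.transpose_pow, hMsymT]
    have h := dot_u_eq (M^3) hsq i j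
    rw [← hudef] at h
    have h3 : u ⬝ᵥ ((M^3) *ᵥ u) = r₃ := by
      rw [show (3:ℕ) = 2 + 1 by norm_num, pow_succ, pow_two, Matrix.mul_assoc,
        ← Matrix.mulVec_mulVec, ← Matrix.mulVec_mulVec, ← hvdef,
        Matrix.dotProduct_mulVec, huM, hr₃]
    rw [h3] at h
    rw [h]
    simp [reff, ← hMdef]
  -- final inequality
  rw [hre1, hre2, hre3, htr]
  clear_value c r₁ r₂ r₃
  have hLHS : (M ^ 2).trace - ((M ^ 2).trace - 2 * c * r₃ + c ^ 2 * (r₂ * r₂))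
      = 2 * c * r₃ - c^2 * r₂^2 := by ring
  rw [hLHS]
  have hr3nn : 0 ≤ r₃ := by nlinarith [hCS, sq_nonneg r₂]
  have hRHS : 2 * r₃ / r₁ - (r₂ / r₁)^2 = (2 * r₃ * r₁ - r₂^2) / r₁^2 := by
    field_simp
  rw [hRHS]
  rw [le_div_iff₀ (by positivity : (0:ℝ) < r₁^2)]
  have h2f : 0 ≤ 2*r₃*r₁ - r₂^2*(1 + c*r₁) := by nlinarith [hCS, hcr, sq_nonneg r₂, hr1pos]
  have hfact : 0 ≤ (1 - c*r₁) * (2*r₃*r₁ - r₂^2*(1 + c*r₁)) :=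
    mul_nonneg (by linarith) h2f
  nlinarith [hfact]
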